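/- Let E(X) = X^n − λ with λ an odd integer and M ∈ Z[X] of degree < n. Let M̄ ∈ F_2[X] denote the reduction of M modulo 2. Then Res(E, M) is odd if and only if gcd(M̄, X^n − 1) = 1 in F_2[X]. Consequently, for φ a power of 2, M is invertible modulo (E, φ) if and only if gcd(M̄, X^n − 1) = 1. -/

import Mathlib

set_option maxHeartbeats 1000000

open Polynomial

private lemma core_sylvester (n m : ℕ) (hn : 1 ≤ n) (Eb Mb : Polynomial (ZMod 2))
    (hEdeg : Eb.natDegree = n) (hEb0 : Eb ≠ 0) (hMdeg : Mb.natDegree ≤ m)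
    (S : Matrix (Fin (m + n)) (Fin (m + n)) (ZMod 2))
    (hSdef : ∀ i j : Fin (m + n), S i j =
      if (j : ℕ) < m then
        if (j : ℕ) ≤ (i : ℕ) ∧ (i : ℕ) ≤ (j : ℕ) + n then Eb.coeff (n + (j:ℕ) - (i:ℕ)) else 0
      else
        if (j : ℕ) - m ≤ (i : ℕ) ∧ (i : ℕ) ≤ (j : ℕ) - m + m then
          Mb.coeff (m + ((j : ℕ) - m) - (i:ℕ)) else 0) :
    S.det ≠ 0 ↔ IsCoprime Mb Eb := by
  classical
  have hEc : ∀ t, n < t → Eb.coeff t = 0 := fun t ht =>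
    coeff_eq_zero_of_natDegree_lt (by omega)
  have hMc : ∀ t, m < t → Mb.coeff t = 0 := fun t ht =>
    coeff_eq_zero_of_natDegree_lt (by omega)
  have hEbdeg : Eb.degree = (n : WithBot ℕ) := by
    rw [degree_eq_natDegree hEb0, hEdeg]
  -- step 1: entries are coefficients of column polynomials
  have hq : ∀ (i j : Fin (m + n)), S i j =
      (if (j:ℕ) < m then Eb * X ^ (m - 1 - (j:ℕ)) else Mb * X ^ (m + n - 1 - (j:ℕ))).coeff
        (m + n - 1 - (i:ℕ)) := by
    intro i j
    have hi := i.isLt; have hjN := j.isLt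
    rw [hSdef]
    by_cases hj : (j:ℕ) < m
    · rw [if_pos hj, if_pos hj, coeff_mul_X_pow']
      by_cases h1 : (j:ℕ) ≤ (i:ℕ) ∧ (i:ℕ) ≤ (j:ℕ) + n
      · rw [if_pos h1, if_pos (by omega)]
        congr 1; omega
      · rw [if_neg h1]
        rcases Nat.lt_or_ge (i:ℕ) ((j:ℕ) + n + 1) with h2 | h2
        · have h3 : (i:ℕ) < (j:ℕ) := by omega
          rw [if_pos (by omega)]
          exact (hEc _ (by omega)).symm
        · rw [if_neg (by omega)]
    · rw [if_neg hj, if_neg hj, coeff_mul_X_pow']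
      have hjm : m ≤ (j:ℕ) := le_of_not_gt hj
      by_cases h1 : (j:ℕ) - m ≤ (i:ℕ) ∧ (i:ℕ) ≤ (j:ℕ) - m + m
      · rw [if_pos h1, if_pos (by omega)]
        congr 1; omega
      · rw [if_neg h1]
        rcases Nat.lt_or_ge (i:ℕ) ((j:ℕ) - m) with h2 | h2
        · rw [if_pos (by omega)]
          exact (hMc _ (by omega)).symm
        · rw [if_neg (by omega)]
  -- step 2: mulVec corresponds to polynomial combinations
  have hmain : ∀ v : Fin (m + n) → ZMod 2, ∃ a b : Polynomial (ZMod 2),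
      (Eb * a + Mb * b).degree < ((m + n : ℕ) : WithBot ℕ) ∧
      (∀ i : Fin (m + n), S.mulVec v i = (Eb * a + Mb * b).coeff (m + n - 1 - (i:ℕ))) ∧
      (∀ j : Fin (m + n), v j = if (j:ℕ) < m then a.coeff (m - 1 - (j:ℕ))
        else b.coeff (m + n - 1 - (j:ℕ))) ∧
      b.degree < (n : WithBot ℕ) := by
    intro v
    refine ⟨∑ j : Fin (m + n), if (j:ℕ) < m then C (v j) * X ^ (m - 1 - (j:ℕ)) else 0,
      ∑ j : Fin (m + n), if (j:ℕ) < m then 0 else C (v j) * X ^ (m + n - 1 - (j:ℕ)),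
      ?_, ?_, ?_, ?_⟩
    case refine_4 =>
      refine lt_of_le_of_lt (degree_sum_le _ _) ?_
      refine (Finset.sup_lt_iff (WithBot.bot_lt_coe n)).mpr fun j _ => ?_
      by_cases hj : (j:ℕ) < m
      · rw [if_pos hj, degree_zero]; exact WithBot.bot_lt_coe n
      · rw [if_neg hj]
        refine lt_of_le_of_lt (degree_C_mul_X_pow_le _ _) ?_
        have hjN := j.isLt
        exact Nat.cast_lt.mpr (by omega)
    case refine_1 =>
      have hadeg : (∑ j : Fin (m + n), if (j:ℕ) < m then C (v j) * X ^ (m - 1 - (j:ℕ)) else 0).degree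
          < (m : WithBot ℕ) := by
        refine lt_of_le_of_lt (degree_sum_le _ _) ?_
        refine (Finset.sup_lt_iff (WithBot.bot_lt_coe m)).mpr fun j _ => ?_
        by_cases hj : (j:ℕ) < m
        · rw [if_pos hj]
          refine lt_of_le_of_lt (degree_C_mul_X_pow_le _ _) ?_
          exact Nat.cast_lt.mpr (by omega)
        · rw [if_neg hj, degree_zero]; exact WithBot.bot_lt_coe m
      have hbdeg : (∑ j : Fin (m + n), if (j:ℕ) < m then 0 else C (v j) * X ^ (m + n - 1 - (j:ℕ))).degree
          < (n : WithBot ℕ) := by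
        refine lt_of_le_of_lt (degree_sum_le _ _) ?_
        refine (Finset.sup_lt_iff (WithBot.bot_lt_coe n)).mpr fun j _ => ?_
        by_cases hj : (j:ℕ) < m
        · rw [if_pos hj, degree_zero]; exact WithBot.bot_lt_coe n
        · rw [if_neg hj]
          refine lt_of_le_of_lt (degree_C_mul_X_pow_le _ _) ?_
          have hjN := j.isLt
          exact Nat.cast_lt.mpr (by omega)
      refine lt_of_le_of_lt (degree_add_le _ _) (max_lt ?_ ?_)
      · refine lt_of_le_of_lt (degree_mul_le _ _) ?_
        calc Eb.degree + _ < (n : WithBot ℕ) + (m : WithBot ℕ) := by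
              rw [hEbdeg]
              exact WithBot.add_lt_add_left (by simp) hadeg
          _ = ((m + n : ℕ) : WithBot ℕ) := by push_cast; ring
      · refine lt_of_le_of_lt (degree_mul_le _ _) ?_
        rcases le_or_gt Mb.degree ((m : WithBot ℕ)) with hMb | hMb
        · calc Mb.degree + _ ≤ (m : WithBot ℕ) + _ := add_le_add_left hMb _
            _ < (m : WithBot ℕ) + (n : WithBot ℕ) := WithBot.add_lt_add_left (by simp) hbdeg
            _ = ((m + n : ℕ) : WithBot ℕ) := by push_cast; ring
        · exact absurd (degree_le_natDegree.trans (by exact_mod_cast hMdeg)) (not_le.mpr hMb)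
    case refine_2 =>
      intro i
      simp only [Matrix.mulVec, dotProduct]
      have : ∀ j : Fin (m + n), S i j * v j =
          ((if (j:ℕ) < m then Eb * (C (v j) * X ^ (m - 1 - (j:ℕ))) else 0)
            + (if (j:ℕ) < m then 0 else Mb * (C (v j) * X ^ (m + n - 1 - (j:ℕ))))).coeff
            (m + n - 1 - (i:ℕ)) := by
        intro j
        rw [hq]
        by_cases hj : (j:ℕ) < m
        · rw [if_pos hj, if_pos hj, if_pos hj, add_zero,
            show Eb * (C (v j) * X ^ (m - 1 - (j:ℕ))) = C (v j) * (Eb * X ^ (m - 1 - (j:ℕ))) by ring,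
            coeff_C_mul, mul_comm]
        · rw [if_neg hj, if_neg hj, if_neg hj, zero_add,
            show Mb * (C (v j) * X ^ (m + n - 1 - (j:ℕ))) = C (v j) * (Mb * X ^ (m + n - 1 - (j:ℕ))) by ring,
            coeff_C_mul, mul_comm]
      rw [Finset.sum_congr rfl fun j _ => this j, ← finset_sum_coeff]
      congr 1
      rw [Finset.sum_add_distrib, Finset.mul_sum, Finset.mul_sum]
      congr 1
      · exact Finset.sum_congr rfl fun j _ => by split <;> simp
      · exact Finset.sum_congr rfl fun j _ => by split <;> simp
    case refine_3 =>
      intro j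
      by_cases hj : (j:ℕ) < m
      · rw [if_pos hj, finset_sum_coeff, Finset.sum_eq_single j]
        · rw [if_pos hj, coeff_C_mul, coeff_X_pow, if_pos rfl, mul_one]
        · intro j' _ hne
          have hne' : (j':ℕ) ≠ (j:ℕ) := fun h => hne (Fin.ext h)
          by_cases hj' : (j':ℕ) < m
          · rw [if_pos hj', coeff_C_mul, coeff_X_pow, if_neg (by omega), mul_zero]
          · rw [if_neg hj', coeff_zero]
        · intro h; exact absurd (Finset.mem_univ j) h
      · rw [if_neg hj, finset_sum_coeff, Finset.sum_eq_single j]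
        · rw [if_neg hj, coeff_C_mul, coeff_X_pow, if_pos rfl, mul_one]
        · intro j' _ hne
          have hne' : (j':ℕ) ≠ (j:ℕ) := fun h => hne (Fin.ext h)
          have hjN := j.isLt; have hj'N := j'.isLt
          by_cases hj' : (j':ℕ) < m
          · rw [if_pos hj', coeff_zero]
          · rw [if_neg hj', coeff_C_mul, coeff_X_pow, if_neg (by omega), mul_zero]
        · intro h; exact absurd (Finset.mem_univ j) h
  constructor
  · intro hdet
    have hunit : IsUnit S.det := isUnit_iff_ne_zero.mpr hdet
    set i0 : Fin (m + n) := ⟨m + n - 1, by omega⟩ with hi0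
    set w : Fin (m + n) → ZMod 2 := Pi.single i0 1 with hw
    have hSv : S.mulVec (S⁻¹.mulVec w) = w := by
      rw [Matrix.mulVec_mulVec, Matrix.mul_nonsing_inv _ hunit, Matrix.one_mulVec]
    obtain ⟨a, b, hdegsum, hS1, _, _⟩ := hmain (S⁻¹.mulVec w)
    have h1 : Eb * a + Mb * b = 1 := by
      ext d
      by_cases hd : d < m + n
      · have hcoeff := congrFun hSv ⟨m + n - 1 - d, by omega⟩
        rw [hS1] at hcoeff
        have hidx : m + n - 1 - (m + n - 1 - d) = d := by omega
        rw [hidx] at hcoeff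
        rw [hcoeff, coeff_one]
        by_cases hd0 : d = 0
        · subst hd0
          rw [if_pos rfl, hw]
          have : (⟨m + n - 1 - 0, by omega⟩ : Fin (m + n)) = i0 := by
            apply Fin.ext; simp [hi0]
          rw [this, Pi.single_eq_same]
        · rw [if_neg hd0, hw, Pi.single_eq_of_ne]
          exact Fin.ne_of_val_ne (by simp [hi0]; omega)
      · rw [coeff_one, if_neg (by omega),
          coeff_eq_zero_of_degree_lt (lt_of_lt_of_le hdegsum (by exact_mod_cast by omega))]
    exact ⟨b, a, by linear_combination h1⟩
  · intro hcop hdet0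
    obtain ⟨v, hv0, hvS⟩ := Matrix.exists_mulVec_eq_zero_iff.mpr hdet0
    obtain ⟨a, b, hdegsum, hS1, hS2, hbdeg⟩ := hmain v
    have hzero : Eb * a + Mb * b = 0 := by
      ext d
      rw [coeff_zero]
      by_cases hd : d < m + n
      · have hcoeff := congrFun hvS ⟨m + n - 1 - d, by omega⟩
        rw [hS1] at hcoeff
        have hidx : m + n - 1 - (m + n - 1 - d) = d := by omega
        rw [hidx] at hcoeff
        exact hcoeff
      · exact coeff_eq_zero_of_degree_lt (lt_of_lt_of_le hdegsum (by exact_mod_cast by omega))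
    have hdvd : Eb ∣ Mb * b := ⟨-a, by linear_combination hzero⟩
    have hb0 : b = 0 := by
      refine eq_zero_of_dvd_of_degree_lt (hcop.symm.dvd_of_dvd_mul_left hdvd) ?_
      rw [hEbdeg]; exact hbdeg
    have ha0 : a = 0 := by
      have : Eb * a = 0 := by rw [hb0, mul_zero, add_zero] at hzero; exact hzero
      rcases mul_eq_zero.mp this with h | h
      · exact absurd h hEb0
      · exact h
    apply hv0
    funext j
    rw [hS2 j, ha0, hb0]
    split <;> simp


/-- The Sylvester matrix of two polynomials `f` and `g`. -/
noncomputable def sylvesterMatrix {R : Type*} [CommRing R] (f g : Polynomial R) :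
    Matrix (Fin (g.natDegree + f.natDegree)) (Fin (g.natDegree + f.natDegree)) R :=
  fun i j =>
    if (j : ℕ) < g.natDegree then
      if (j : ℕ) ≤ (i : ℕ) ∧ (i : ℕ) ≤ (j : ℕ) + f.natDegree then
        f.coeff (f.natDegree + j - i)
      else 0
    else
      if (j : ℕ) - g.natDegree ≤ (i : ℕ) ∧ (i : ℕ) ≤ (j : ℕ) - g.natDegree + g.natDegree then
        g.coeff (g.natDegree + ((j : ℕ) - g.natDegree) - i)
      else 0

/-- The resultant of `f` and `g`: the determinant of their Sylvester matrix. -/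
noncomputable def resultant {R : Type*} [CommRing R] (f g : Polynomial R) : R :=
  (sylvesterMatrix f g).det

/-- for `E = X^n - λ` with `λ` odd and `M ∈ ℤ[X]` of degree `< n`,
`Res(E, M)` is odd iff `gcd(M̄, X^n - 1) = 1` in `F₂[X]`; consequently, for `φ = 2^k`,
`M` is invertible mod `(E, φ)` iff `gcd(M̄, X^n - 1) = 1`. -/
theorem resultant_odd_iff_coprime_mod_two (n : ℕ) (hn : 1 ≤ n) (lam : ℤ) (hlam : Odd lam)
    (M : Polynomial ℤ) (hM : M.natDegree < n) :
    (Odd (_root_.resultant ((X : Polynomial ℤ) ^ n - C lam) M)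
      ↔ EuclideanDomain.gcd (M.map (Int.castRingHom (ZMod 2)))
          ((X : Polynomial (ZMod 2)) ^ n - 1) = 1) ∧
    ∀ k : ℕ, 1 ≤ k →
      (IsUnit (Ideal.Quotient.mk
          (Ideal.span ({(X : Polynomial ℤ) ^ n - C lam, C ((2 : ℤ) ^ k)} : Set (Polynomial ℤ))) M)
        ↔ EuclideanDomain.gcd (M.map (Int.castRingHom (ZMod 2)))
            ((X : Polynomial (ZMod 2)) ^ n - 1) = 1) := by
  classical
  set φ := Int.castRingHom (ZMod 2) with hφ
  set Mb := M.map φ with hMb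
  set E : Polynomial ℤ := X ^ n - C lam with hE
  set Xn1 : Polynomial (ZMod 2) := X ^ n - 1 with hXn1
  have hEdeg : E.natDegree = n := natDegree_X_pow_sub_C
  have hlam2 : ((lam : ZMod 2)) = 1 := by
    obtain ⟨t, ht⟩ := hlam
    subst ht
    push_cast
    rw [show (2 : ZMod 2) = 0 by decide]
    ring
  have hEmap : E.map φ = Xn1 := by
    rw [hE, hXn1, Polynomial.map_sub, Polynomial.map_pow, map_X, map_C]
    rw [show φ lam = (lam : ZMod 2) from rfl, hlam2, map_one]
  have hXdeg : Xn1.natDegree = n := by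
    rw [hXn1, ← C_1]; exact natDegree_X_pow_sub_C
  have hX0 : Xn1 ≠ 0 := by
    intro h
    rw [h, natDegree_zero] at hXdeg
    omega
  -- the coprimality ↔ gcd bridge
  have hgcd : IsCoprime Mb Xn1 ↔ EuclideanDomain.gcd Mb Xn1 = 1 := by
    constructor
    · intro h
      have hu := EuclideanDomain.gcd_isUnit_iff.mpr h
      obtain ⟨r, hr, hCr⟩ := Polynomial.isUnit_iff.mp hu
      have hr1 : r = 1 := by
        have := hr.ne_zero
        revert this
        exact (by decide : ∀ x : ZMod 2, x ≠ 0 → x = 1) r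
      rw [← hCr, hr1, map_one]
    · intro h
      exact EuclideanDomain.gcd_isUnit_iff.mp (h ▸ isUnit_one)
  -- first part: resultant mod 2
  have hres : Odd (_root_.resultant E M) ↔ IsCoprime Mb Xn1 := by
    have hcast : ((_root_.resultant E M : ℤ) : ZMod 2) = ((sylvesterMatrix E M).map φ).det := by
      rw [_root_.resultant, show (((sylvesterMatrix E M).det : ℤ) : ZMod 2) = φ (sylvesterMatrix E M).det from rfl,
        RingHom.map_det]
      rfl
    have hOdd : Odd (_root_.resultant E M) ↔ ((_root_.resultant E M : ℤ) : ZMod 2) ≠ 0 := by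
      rw [Ne, ZMod.intCast_zmod_eq_zero_iff_dvd, Nat.cast_ofNat, Int.two_dvd_ne_zero, Int.odd_iff]
    have hn' : 1 ≤ E.natDegree := by rw [hEdeg]; exact hn
    have hkey := core_sylvester E.natDegree M.natDegree hn'
      ((X : Polynomial (ZMod 2)) ^ E.natDegree - 1) Mb
      (by rw [hEdeg, ← C_1]; exact natDegree_X_pow_sub_C)
      (by rw [show (X : Polynomial (ZMod 2)) ^ E.natDegree - 1 = Xn1 by rw [hEdeg, hXn1]]; exact hX0)
      (natDegree_map_le)
      ((sylvesterMatrix E M).map φ)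
      (by
        intro i j
        have hcE : ∀ t, ((X : Polynomial (ZMod 2)) ^ E.natDegree - 1).coeff t = φ (E.coeff t) := by
          intro t
          rw [show (X : Polynomial (ZMod 2)) ^ E.natDegree - 1 = E.map φ by
            rw [hEmap, hEdeg, hXn1], coeff_map]
        have hcM : ∀ t, Mb.coeff t = φ (M.coeff t) := fun t => by rw [hMb, coeff_map]
        simp only [Matrix.map_apply, sylvesterMatrix, apply_ite φ, map_zero, hcE, hcM])
    rw [show (X : Polynomial (ZMod 2)) ^ E.natDegree - 1 = Xn1 by rw [hEdeg, hXn1]] at hkey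
    rw [hOdd, hcast, hkey]
  constructor
  · rw [hres, hgcd]
  -- second part
  · intro k hk
    rw [← hgcd]
    set I : Ideal (Polynomial ℤ) := Ideal.span {E, C ((2:ℤ) ^ k)} with hI
    constructor
    · -- unit mod (E, 2^k) → coprime
      intro hu
      set J : Ideal (Polynomial (ZMod 2)) := Ideal.span {Xn1} with hJ
      set ρ : Polynomial ℤ →+* Polynomial (ZMod 2) ⧸ J :=
        (Ideal.Quotient.mk J).comp (mapRingHom φ) with hρ
      have hker : ∀ p ∈ I, ρ p = 0 := by
        intro p hp
        rw [hI] at hp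
        have hle : Ideal.span {E, C ((2:ℤ) ^ k)} ≤ RingHom.ker ρ := by
          rw [Ideal.span_le]
          rintro q hq
          simp only [Set.mem_insert_iff, Set.mem_singleton_iff] at hq
          rcases hq with rfl | rfl
          · rw [SetLike.mem_coe, RingHom.mem_ker, hρ, RingHom.comp_apply, coe_mapRingHom, hEmap]
            exact Ideal.Quotient.eq_zero_iff_mem.mpr (Ideal.subset_span rfl)
          · rw [SetLike.mem_coe, RingHom.mem_ker, hρ, RingHom.comp_apply, coe_mapRingHom, map_C]
            have h2k : (Int.cast ((2:ℤ)^k) : ZMod 2) = 0 := by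
              rw [ZMod.intCast_zmod_eq_zero_iff_dvd]
              exact_mod_cast dvd_pow_self (2:ℤ) (by omega : k ≠ 0)
            rw [show φ ((2:ℤ)^k) = (Int.cast ((2:ℤ)^k) : ZMod 2) from rfl, h2k, map_zero, map_zero]
        exact hle hp
      have hu2 := hu.map (Ideal.Quotient.lift I ρ hker)
      rw [Ideal.Quotient.lift_mk] at hu2
      have hρM : ρ M = Ideal.Quotient.mk J Mb := by
        rw [hρ, RingHom.comp_apply, coe_mapRingHom, hMb]
      rw [hρM] at hu2
      obtain ⟨c0, hc0⟩ := hu2.exists_right_inv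
      obtain ⟨c, rfl⟩ := Ideal.Quotient.mk_surjective c0
      have hmem : Mb * c - 1 ∈ J := by
        rw [← Ideal.Quotient.eq_zero_iff_mem, map_sub, map_mul, map_one, hc0, sub_self]
      rw [hJ, Ideal.mem_span_singleton] at hmem
      obtain ⟨s, hs⟩ := hmem
      exact ⟨c, -s, by linear_combination hs⟩
    · -- coprime → unit
      intro hcop
      obtain ⟨u, w, huw⟩ := hcop
      obtain ⟨U, hU⟩ := Polynomial.map_surjective φ ZMod.intCast_surjective u
      obtain ⟨W, hW⟩ := Polynomial.map_surjective φ ZMod.intCast_surjective w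
      have hD : (U * M + W * E - 1).map φ = 0 := by
        rw [Polynomial.map_sub, Polynomial.map_add, Polynomial.map_mul, Polynomial.map_mul,
          hU, hW, hEmap, Polynomial.map_one, ← hMb]
        linear_combination huw
      have hdvd : C (2:ℤ) ∣ U * M + W * E - 1 := by
        rw [C_dvd_iff_dvd_coeff]
        intro i
        have := congrArg (fun p => p.coeff i) hD
        simp only [coeff_map, coeff_zero] at this
        have h2 : ((U * M + W * E - 1).coeff i : ZMod 2) = 0 := this
        rw [ZMod.intCast_zmod_eq_zero_iff_dvd] at h2
        exact_mod_cast h2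
      obtain ⟨D', hD'⟩ := hdvd
      have hEmem : Ideal.Quotient.mk I E = 0 :=
        Ideal.Quotient.eq_zero_iff_mem.mpr (Ideal.subset_span (by simp))
      have hmkUM : Ideal.Quotient.mk I (U * M) = 1 + Ideal.Quotient.mk I (C (2:ℤ) * D') := by
        have hid : U * M = (1 + C (2:ℤ) * D') - W * E := by linear_combination hD'
        rw [hid]
        simp only [map_sub, map_add, map_one, map_mul]
        rw [hEmem, mul_zero, sub_zero]
      have hnil : IsNilpotent (Ideal.Quotient.mk I (C (2:ℤ) * D')) := by
        refine ⟨k, ?_⟩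
        rw [← map_pow, mul_pow, ← C_pow]
        exact Ideal.Quotient.eq_zero_iff_mem.mpr
          (Ideal.mul_mem_right _ _ (Ideal.subset_span (by simp)))
      have hUnit : IsUnit (Ideal.Quotient.mk I (U * M)) := by
        rw [hmkUM]
        exact IsNilpotent.isUnit_one_add hnil
      rw [map_mul] at hUnit
      exact isUnit_of_mul_isUnit_right hUnit
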